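/- Let η ∈ (-1, 1). The function G : (-1,1) → ℝ defined by G(c) = ∫_{-1}^{1} (v - c) / (1 + η · sgn(v - c)) dv is continuous and strictly decreasing on (-1,1), satisfies G(c) > 0 as c → -1⁺ and G(c) < 0 as c → 1⁻, and therefore has exactly one zero c(η) ∈ (-1, 1). In particular there exists a unique velocity c_* ∈ (-1,1) with ∫_{-1}^{1} (v - c_*)/T_+(v - c_*) dv = 0 for T_+(w) = 1 - (χ_M + χ_N) sgn(w), and a unique velocity c^* ∈ (-1,1) with ∫_{-1}^{1} (v - c^*)/T_-(v - c^*) dv = 0 for T_-(w) = 1 + (χ_M - χ_N) sgn(w), whenever χ_M + χ_N < 1 and |χ_M - χ_N| < 1. -/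
import Mathlib


open Filter MeasureTheory intervalIntegral

noncomputable def Fη (η c : ℝ) : ℝ := (1-c)^2/(2*(1+η)) - (1+c)^2/(2*(1-η))

lemma Gval (η c : ℝ) (hη1 : -1 < η) (hη2 : η < 1) (hc1 : (-1:ℝ) ≤ c) (hc2 : c ≤ 1) :
    (∫ v in (-1:ℝ)..1, (v - c) / (1 + η * Real.sign (v - c))) = Fη η c := by
  have hηp : (0:ℝ) < 1 + η := by linarith
  have hηm : (0:ℝ) < 1 - η := by linarith
  set f : ℝ → ℝ := fun v => (v - c) / (1 + η * Real.sign (v - c)) with hf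
  have eq1 : Set.EqOn f (fun v => (v-c)/(1-η)) (Set.Icc (-1) c) := by
    intro v hv
    rcases lt_or_eq_of_le hv.2 with h | h
    · simp only [hf]
      rw [Real.sign_of_neg (by linarith : v - c < 0)]
      ring_nf
    · simp [hf, h]
  have eq2 : Set.EqOn f (fun v => (v-c)/(1+η)) (Set.Icc c 1) := by
    intro v hv
    rcases lt_or_eq_of_le hv.1 with h | h
    · simp only [hf]
      rw [Real.sign_of_pos (by linarith : 0 < v - c)]
      norm_num
    · simp [hf, ← h]
  have hg1 : IntervalIntegrable (fun v : ℝ => (v-c)/(1-η)) volume (-1) c :=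
    (Continuous.intervalIntegrable (by continuity) _ _)
  have hg2 : IntervalIntegrable (fun v : ℝ => (v-c)/(1+η)) volume c 1 :=
    (Continuous.intervalIntegrable (by continuity) _ _)
  have hi1 : IntervalIntegrable f volume (-1) c := by
    rw [intervalIntegrable_iff]
    refine hg1.def'.congr_fun (fun v hv => ?_) measurableSet_uIoc
    rw [Set.uIoc_of_le hc1] at hv
    exact (eq1 (Set.Ioc_subset_Icc_self hv)).symm
  have hi2 : IntervalIntegrable f volume c 1 := by
    rw [intervalIntegrable_iff]
    refine hg2.def'.congr_fun (fun v hv => ?_) measurableSet_uIoc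
    rw [Set.uIoc_of_le hc2] at hv
    exact (eq2 (Set.Ioc_subset_Icc_self hv)).symm
  have split := integral_add_adjacent_intervals hi1 hi2
  have e1 : (∫ v in (-1:ℝ)..c, f v) = ∫ v in (-1:ℝ)..c, (v-c)/(1-η) := by
    apply integral_congr
    rwa [Set.uIcc_of_le hc1]
  have e2 : (∫ v in c..(1:ℝ), f v) = ∫ v in c..(1:ℝ), (v-c)/(1+η) := by
    apply integral_congr
    rwa [Set.uIcc_of_le hc2]
  have v1 : (∫ v in (-1:ℝ)..c, (v-c)/(1-η)) = -(1+c)^2/(2*(1-η)) := by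
    simp only [div_eq_mul_inv]
    rw [intervalIntegral.integral_mul_const]
    rw [intervalIntegral.integral_sub (intervalIntegrable_id) (intervalIntegrable_const)]
    simp [integral_id]
    field_simp
    ring
  have v2 : (∫ v in c..(1:ℝ), (v-c)/(1+η)) = (1-c)^2/(2*(1+η)) := by
    simp only [div_eq_mul_inv]
    rw [intervalIntegral.integral_mul_const]
    rw [intervalIntegral.integral_sub (intervalIntegrable_id) (intervalIntegrable_const)]
    simp [integral_id]
    field_simp
    ring
  rw [← split, e1, e2, v1, v2, Fη]
  ring

lemma Fη_cont (η : ℝ) : Continuous (Fη η) := by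
  unfold Fη; continuity

lemma Fη_anti (η : ℝ) (hη1 : -1 < η) (hη2 : η < 1) :
    StrictAntiOn (Fη η) (Set.Icc (-1:ℝ) 1) := by
  intro a ha b hb hab
  have hηp : (0:ℝ) < 2*(1 + η) := by linarith
  have hηm : (0:ℝ) < 2*(1 - η) := by linarith
  have h1 : (1-b)^2 ≤ (1-a)^2 := by nlinarith [ha.1, hb.2]
  have h2 : (1+a)^2 < (1+b)^2 := by nlinarith [ha.1, hb.2]
  have hA : (1-b)^2/(2*(1+η)) ≤ (1-a)^2/(2*(1+η)) := by gcongr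
  have hB : (1+a)^2/(2*(1-η)) < (1+b)^2/(2*(1-η)) := by gcongr
  unfold Fη
  linarith

lemma Fη_neg_one (η : ℝ) (hη1 : -1 < η) : 0 < Fη η (-1) := by
  have : (0:ℝ) < 1 + η := by linarith
  unfold Fη
  norm_num
  positivity

lemma Fη_one (η : ℝ) (hη2 : η < 1) : Fη η 1 < 0 := by
  have h : (0:ℝ) < 1 - η := by linarith
  have : (0:ℝ) < 2/(2*(1-η)) := by positivity
  unfold Fη
  norm_num
  linarith

lemma uniqueZero (η : ℝ) (hη1 : -1 < η) (hη2 : η < 1) :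
    ∃! c : ℝ, c ∈ Set.Ioo (-1:ℝ) 1 ∧
      (∫ v in (-1:ℝ)..1, (v - c) / (1 + η * Real.sign (v - c))) = 0 := by
  obtain ⟨c0, hc0, hFc0⟩ := intermediate_value_Ioo' (by norm_num : (-1:ℝ) ≤ 1)
    (Fη_cont η).continuousOn ⟨Fη_one η hη2, Fη_neg_one η hη1⟩
  refine ⟨c0, ⟨hc0, by rw [Gval η c0 hη1 hη2 hc0.1.le hc0.2.le]; exact hFc0⟩, ?_⟩
  rintro y ⟨hy, hGy⟩
  have hFy : Fη η y = 0 := by rw [← Gval η y hη1 hη2 hy.1.le hy.2.le]; exact hGy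
  exact (Fη_anti η hη1 hη2).injOn ⟨hy.1.le, hy.2.le⟩ ⟨hc0.1.le, hc0.2.le⟩
    (hFy.trans hFc0.symm)

/-- The drift functional `G(c) = ∫_{-1}^1 (v-c)/(1 + η sgn(v-c)) dv` is
continuous and strictly decreasing on `(-1,1)`, positive near `-1`, negative
near `1`, and hence has a unique zero in `(-1,1)`.  In particular the critical
speeds `c_*` (for `T₊(w) = 1 - (χ_M + χ_N) sgn w`) and `c^*` (for
`T₋(w) = 1 + (χ_M - χ_N) sgn w`) exist and are unique whenever
`χ_M + χ_N < 1` and `|χ_M - χ_N| < 1`. -/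
theorem drift_functional_unique_zero
    (η : ℝ) (hη : η ∈ Set.Ioo (-1 : ℝ) 1)
    (χM χN : ℝ) (hχM : 0 ≤ χM) (hχN : 0 ≤ χN)
    (hsum : χM + χN < 1) (hdiff : |χM - χN| < 1)
    (G : ℝ → ℝ)
    (hG : ∀ c, G c = ∫ v in (-1 : ℝ)..1, (v - c) / (1 + η * Real.sign (v - c))) :
    ContinuousOn G (Set.Ioo (-1 : ℝ) 1) ∧
    StrictAntiOn G (Set.Ioo (-1 : ℝ) 1) ∧
    (∀ᶠ c in nhdsWithin (-1 : ℝ) (Set.Ioi (-1 : ℝ)), 0 < G c) ∧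
    (∀ᶠ c in nhdsWithin (1 : ℝ) (Set.Iio (1 : ℝ)), G c < 0) ∧
    (∃! c : ℝ, c ∈ Set.Ioo (-1 : ℝ) 1 ∧ G c = 0) ∧
    (∃! cs : ℝ, cs ∈ Set.Ioo (-1 : ℝ) 1 ∧
      ∫ v in (-1 : ℝ)..1,
        (v - cs) / (1 - (χM + χN) * Real.sign (v - cs)) = 0) ∧
    (∃! cS : ℝ, cS ∈ Set.Ioo (-1 : ℝ) 1 ∧
      ∫ v in (-1 : ℝ)..1,
        (v - cS) / (1 + (χM - χN) * Real.sign (v - cS)) = 0) := by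
  obtain ⟨hη1, hη2⟩ := hη
  have hEq : ∀ c ∈ Set.Icc (-1:ℝ) 1, G c = Fη η c := fun c hc =>
    (hG c).trans (Gval η c hη1 hη2 hc.1 hc.2)
  refine ⟨?_, ?_, ?_, ?_, ?_, ?_, ?_⟩
  · exact (Fη_cont η).continuousOn.congr
      (fun c hc => hEq c ⟨hc.1.le, hc.2.le⟩)
  · intro a ha b hb hab
    rw [hEq a ⟨ha.1.le, ha.2.le⟩, hEq b ⟨hb.1.le, hb.2.le⟩]
    exact Fη_anti η hη1 hη2 ⟨ha.1.le, ha.2.le⟩ ⟨hb.1.le, hb.2.le⟩ hab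
  · have hpos : ∀ᶠ c in nhds (-1:ℝ), 0 < Fη η c :=
      ((Fη_cont η).tendsto (-1)).eventually (eventually_gt_nhds (Fη_neg_one η hη1))
    have hlt : ∀ᶠ c in nhds (-1:ℝ), c < 1 := eventually_lt_nhds (by norm_num)
    filter_upwards [self_mem_nhdsWithin, nhdsWithin_le_nhds hpos,
      nhdsWithin_le_nhds hlt] with c h1 h2 h3
    rw [hEq c ⟨le_of_lt h1, h3.le⟩]
    exact h2
  · have hneg : ∀ᶠ c in nhds (1:ℝ), Fη η c < 0 :=
      ((Fη_cont η).tendsto 1).eventually (eventually_lt_nhds (Fη_one η hη2))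
    have hgt : ∀ᶠ c in nhds (1:ℝ), -1 < c := eventually_gt_nhds (by norm_num)
    filter_upwards [self_mem_nhdsWithin, nhdsWithin_le_nhds hneg,
      nhdsWithin_le_nhds hgt] with c h1 h2 h3
    rw [hEq c ⟨h3.le, le_of_lt h1⟩]
    exact h2
  · simpa only [← hG] using uniqueZero η hη1 hη2
  · have hrw : ∀ c : ℝ, (∫ v in (-1:ℝ)..1,
        (v - c) / (1 - (χM + χN) * Real.sign (v - c)))
        = ∫ v in (-1:ℝ)..1, (v - c) / (1 + (-(χM + χN)) * Real.sign (v - c)) := by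
      intro c
      apply intervalIntegral.integral_congr
      intro v _
      ring_nf
    simp only [hrw]
    exact uniqueZero (-(χM + χN)) (by linarith) (by linarith)
  · have h := abs_lt.mp hdiff
    exact uniqueZero (χM - χN) (by linarith [h.1]) h.2
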